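/- arXiv:1207.5712 — 2 statements merged into one kernel-verified Lean document; each statement's English description precedes it below -/
import Mathlib

section
/- Let G be the simple graph on vertex set {1,...,7} with edge set E = {{1,2},{1,6},{1,7},{2,3},{2,6},{2,7},{3,4},{3,5},{3,6},{3,7},{4,5},{4,7},{5,6},{6,7}} (the graph G1145 of the atlas). Then msr(G) = 4; that is, there exists a 7×7 Hermitian positive semidefinite complex matrix with graph G of rank 4, and every 7×7 Hermitian positive semidefinite complex matrix with graph G has rank at least 4. -/
open Matrix ComplexOrder

/-- The edge set of the graph G1145 on vertices 1,...,7. -/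
def edgesG1145 : Set (Sym2 ℕ) :=
  {s(1, 2), s(1, 6), s(1, 7), s(2, 3), s(2, 6), s(2, 7), s(3, 4), s(3, 5), s(3, 6), s(3, 7), s(4, 5), s(4, 7), s(5, 6), s(6, 7)}

/-- `M` has graph G1145: for `i ≠ j`, `M i j ≠ 0` iff `{i+1, j+1}` is an edge of G1145. -/
def HasGraphG1145 (M : Matrix (Fin 7) (Fin 7) ℂ) : Prop :=
  ∀ i j : Fin 7, i ≠ j → (M i j ≠ 0 ↔ s((i : ℕ) + 1, (j : ℕ) + 1) ∈ edgesG1145)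

lemma vec7_five {α : Type*} (a b c d e f g : α) : ![a,b,c,d,e,f,g] 5 = f := rfl

lemma vec7_six {α : Type*} (a b c d e f g : α) : ![a,b,c,d,e,f,g] 6 = g := rfl

/-- A 4×7 matrix whose columns form an orthogonal representation of G1145 in ℂ⁴. -/
def A1145 : Matrix (Fin 4) (Fin 7) ℂ :=
  !![1,1,0,0,0,1,1; 0,0,1,1,1,0,1; 0,0,0,0,1,1,-1; 0,1,1,0,0,1,1]

set_option maxHeartbeats 2000000 in
lemma A1145_graph : HasGraphG1145 (A1145ᴴ * A1145) := by
  intro i j hij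
  fin_cases i <;> fin_cases j <;>
    simp_all [A1145, Matrix.mul_apply, Fin.sum_univ_four, Matrix.conjTranspose_apply,
      Matrix.vecHead, Matrix.vecTail, vec7_five, vec7_six, edgesG1145, Sym2.eq_iff]

lemma A1145_surj : Function.Surjective A1145.mulVecLin := by
  intro y
  refine ⟨![y 0 - y 3, y 3, 0, y 1 - y 2, y 2, 0, 0], ?_⟩
  funext i
  fin_cases i <;>
    simp [A1145, Matrix.mulVecLin_apply, Matrix.mulVec, dotProduct, Fin.sum_univ_seven,
      Matrix.vecHead, Matrix.vecTail, vec7_five, vec7_six]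

lemma A1145_rank : A1145.rank = 4 := by
  rw [Matrix.rank, LinearMap.range_eq_top.mpr A1145_surj]
  simp

/-- msr(G1145) = 4. -/
theorem msr_G1145 :
    (∃ M : Matrix (Fin 7) (Fin 7) ℂ, M.PosSemidef ∧ HasGraphG1145 M ∧ M.rank = 4) ∧
    (∀ M : Matrix (Fin 7) (Fin 7) ℂ, M.PosSemidef → HasGraphG1145 M → 4 ≤ M.rank) := by
  constructor
  · exact ⟨A1145ᴴ * A1145, Matrix.posSemidef_conjTranspose_mul_self _, A1145_graph,
      by rw [Matrix.rank_conjTranspose_mul_self, A1145_rank]⟩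
  · intro M hPSD hG
    by_contra hlt
    push_neg at hlt
    obtain ⟨B, rfl⟩ : ∃ B : Matrix (Fin 7) (Fin 7) ℂ, M = Bᴴ * B := by
      open MatrixOrder in
      obtain ⟨B, hB⟩ := CStarAlgebra.nonneg_iff_eq_star_mul_self.mp hPSD.nonneg
      exact ⟨B, hB⟩
    -- Gram vectors: columns of B
    obtain ⟨v, hv_def⟩ : ∃ v : Fin 7 → Fin 7 → ℂ, v = fun i k => B k i := ⟨_, rfl⟩
    have hd : ∀ i j : Fin 7, star (v i) ⬝ᵥ v j = (Bᴴ * B) i j := by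
      intro i j
      rw [hv_def]
      simp [Matrix.mul_apply, dotProduct, Matrix.conjTranspose_apply]
    have hvr : ∀ i : Fin 7, v i ∈ LinearMap.range B.mulVecLin := by
      intro i
      refine ⟨Pi.single i 1, ?_⟩
      rw [hv_def]
      funext k
      simp [Matrix.mulVecLin_apply, Matrix.mulVec_single]
    -- entries of the matrix, read off from the graph condition
    have hedge : ∀ (i j : Fin 7), i ≠ j → s((i:ℕ)+1,(j:ℕ)+1) ∈ edgesG1145 → (Bᴴ * B) i j ≠ 0 :=
      fun i j h he => (hG i j h).mpr he
    have hnon : ∀ (i j : Fin 7), i ≠ j → s((i:ℕ)+1,(j:ℕ)+1) ∉ edgesG1145 → (Bᴴ * B) i j = 0 :=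
      fun i j h he => not_not.mp (fun hn => he ((hG i j h).mp hn))
    have h02 : (Bᴴ * B) 0 2 = 0 :=
      hnon 0 2 (by decide) (show s(1, 3) ∉ edgesG1145 by simp [edgesG1145, Sym2.eq_iff])
    have h03 : (Bᴴ * B) 0 3 = 0 :=
      hnon 0 3 (by decide) (show s(1, 4) ∉ edgesG1145 by simp [edgesG1145, Sym2.eq_iff])
    have h04 : (Bᴴ * B) 0 4 = 0 :=
      hnon 0 4 (by decide) (show s(1, 5) ∉ edgesG1145 by simp [edgesG1145, Sym2.eq_iff])
    have h13 : (Bᴴ * B) 1 3 = 0 :=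
      hnon 1 3 (by decide) (show s(2, 4) ∉ edgesG1145 by simp [edgesG1145, Sym2.eq_iff])
    have h14 : (Bᴴ * B) 1 4 = 0 :=
      hnon 1 4 (by decide) (show s(2, 5) ∉ edgesG1145 by simp [edgesG1145, Sym2.eq_iff])
    have h53 : (Bᴴ * B) 5 3 = 0 :=
      hnon 5 3 (by decide) (show s(6, 4) ∉ edgesG1145 by simp [edgesG1145, Sym2.eq_iff])
    have h05 : (Bᴴ * B) 0 5 ≠ 0 :=
      hedge 0 5 (by decide) (show s(1, 6) ∈ edgesG1145 by simp [edgesG1145, Sym2.eq_iff])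
    have h12 : (Bᴴ * B) 1 2 ≠ 0 :=
      hedge 1 2 (by decide) (show s(2, 3) ∈ edgesG1145 by simp [edgesG1145, Sym2.eq_iff])
    have h54 : (Bᴴ * B) 5 4 ≠ 0 :=
      hedge 5 4 (by decide) (show s(6, 5) ∈ edgesG1145 by simp [edgesG1145, Sym2.eq_iff])
    have h36 : (Bᴴ * B) 3 6 ≠ 0 :=
      hedge 3 6 (by decide) (show s(4, 7) ∈ edgesG1145 by simp [edgesG1145, Sym2.eq_iff])
    -- the column space has dimension at most 3
    have hrk : Module.finrank ℂ (LinearMap.range B.mulVecLin) ≤ 3 := by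
      have h1 : (Bᴴ * B).rank = B.rank := Matrix.rank_conjTranspose_mul_self B
      simp only [Matrix.rank] at h1 hlt
      omega
    -- hence the Gram vectors v2, v5, v3, v4 are linearly dependent
    have hnli : ¬ LinearIndependent ℂ ![v 2, v 5, v 3, v 4] := by
      intro hLI
      have hw : ∀ k : Fin 4, ![v 2, v 5, v 3, v 4] k ∈ LinearMap.range B.mulVecLin := by
        intro k; fin_cases k <;> exact hvr _
      have hLI' : LinearIndependent ℂ
          (fun k : Fin 4 => (⟨![v 2, v 5, v 3, v 4] k, hw k⟩ : LinearMap.range B.mulVecLin)) := by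
        apply LinearIndependent.of_comp (LinearMap.range B.mulVecLin).subtype
        exact hLI
      have := hLI'.fintype_card_le_finrank
      simp only [Fintype.card_fin] at this
      omega
    obtain ⟨g, hsum, k0, hk0⟩ := Fintype.not_linearIndependent_iff.mp hnli
    rw [Fin.sum_univ_four] at hsum
    simp only [Matrix.cons_val_zero, Matrix.cons_val_one, Matrix.head_cons,
      Matrix.cons_val_two, Matrix.tail_cons, Matrix.cons_val_three] at hsum
    -- pairing the dependence relation with v0 gives g 1 = 0
    have e0 : g 0 * (Bᴴ*B) 0 2 + g 1 * (Bᴴ*B) 0 5 + g 2 * (Bᴴ*B) 0 3 + g 3 * (Bᴴ*B) 0 4 = 0 := by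
      have := congrArg (fun x => star (v 0) ⬝ᵥ x) hsum
      simpa [dotProduct_add, dotProduct_smul, smul_eq_mul, hd] using this
    have hg1 : g 1 = 0 := by
      rw [h02, h03, h04] at e0
      simp only [mul_zero, zero_add, add_zero] at e0
      exact (mul_eq_zero.mp e0).resolve_right h05
    -- pairing with v1 gives g 0 = 0
    have e1 : g 0 * (Bᴴ*B) 1 2 + g 1 * (Bᴴ*B) 1 5 + g 2 * (Bᴴ*B) 1 3 + g 3 * (Bᴴ*B) 1 4 = 0 := by
      have := congrArg (fun x => star (v 1) ⬝ᵥ x) hsum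
      simpa [dotProduct_add, dotProduct_smul, smul_eq_mul, hd] using this
    have hg0 : g 0 = 0 := by
      rw [h13, h14, hg1] at e1
      simp only [mul_zero, zero_mul, zero_add, add_zero] at e1
      exact (mul_eq_zero.mp e1).resolve_right h12
    -- pairing with v5 gives g 3 = 0
    have e5 : g 0 * (Bᴴ*B) 5 2 + g 1 * (Bᴴ*B) 5 5 + g 2 * (Bᴴ*B) 5 3 + g 3 * (Bᴴ*B) 5 4 = 0 := by
      have := congrArg (fun x => star (v 5) ⬝ᵥ x) hsum
      simpa [dotProduct_add, dotProduct_smul, smul_eq_mul, hd] using this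
    have hg3 : g 3 = 0 := by
      rw [h53, hg0, hg1] at e5
      simp only [mul_zero, zero_mul, zero_add, add_zero] at e5
      exact (mul_eq_zero.mp e5).resolve_right h54
    -- so g 2 ≠ 0, forcing v3 = 0, contradicting the edge {4,7}
    have hg2 : g 2 ≠ 0 := by
      intro h2
      apply hk0
      fin_cases k0 <;> first | exact hg0 | exact hg1 | exact h2 | exact hg3
    have hv3 : v 3 = 0 := by
      rw [hg0, hg1, hg3] at hsum
      simp only [zero_smul, zero_add, add_zero] at hsum
      exact (smul_eq_zero.mp hsum).resolve_left hg2
    exact h36 (by rw [← hd]; simp [hv3])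
end

section
/- Let G be the simple graph on vertex set {1,...,7} with edge set E = {{1,2},{1,4},{1,7},{2,3},{2,4},{2,5},{2,6},{2,7},{3,4},{3,5},{3,6},{3,7},{4,5},{4,6},{5,7},{6,7}} (the graph G1224 of the atlas). Then msr(G) = 3; that is, there exists a 7×7 Hermitian positive semidefinite complex matrix with graph G of rank 3, and every 7×7 Hermitian positive semidefinite complex matrix with graph G has rank at least 3. -/
open Matrix ComplexOrder

/-- The edge set of the graph G1224 on vertices 1,...,7. -/
def edgesG1224 : Set (Sym2 ℕ) :=
  {s(1, 2), s(1, 4), s(1, 7), s(2, 3), s(2, 4), s(2, 5), s(2, 6), s(2, 7), s(3, 4), s(3, 5), s(3, 6), s(3, 7), s(4, 5), s(4, 6), s(5, 7), s(6, 7)}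

/-- `M` has graph G1224: for `i ≠ j`, `M i j ≠ 0` iff `{i+1, j+1}` is an edge of G1224. -/
def HasGraphG1224 (M : Matrix (Fin 7) (Fin 7) ℂ) : Prop :=
  ∀ i j : Fin 7, i ≠ j → (M i j ≠ 0 ↔ s((i : ℕ) + 1, (j : ℕ) + 1) ∈ edgesG1224)

@[simp] lemma cons_val_five' {α : Type*} {m : ℕ} (x : α)
    (u : Fin m.succ.succ.succ.succ.succ → α) :
    vecCons x u 5 = vecHead (vecTail (vecTail (vecTail (vecTail u)))) := rfl

@[simp] lemma cons_val_six' {α : Type*} {m : ℕ} (x : α)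
    (u : Fin m.succ.succ.succ.succ.succ.succ → α) :
    vecCons x u 6 = vecHead (vecTail (vecTail (vecTail (vecTail (vecTail u))))) := rfl

/-- Rows of a Gram decomposition realizing G1224 in rank 3. -/
def Amat : Matrix (Fin 7) (Fin 3) ℂ :=
  !![1,0,0; 1,1,2; 0,1,1; 1,2,1; 0,1,0; 0,0,1; 1,1,-3]

set_option maxHeartbeats 4000000 in
lemma amat_hasGraph : HasGraphG1224 (Amat * Amatᴴ) := by
  intro i j hij
  fin_cases i <;> fin_cases j <;>
    first
    | exact absurd rfl hij
    | (simp [Amat, Matrix.mul_apply, Matrix.conjTranspose_apply, Fin.sum_univ_three,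
        edgesG1224, Sym2.eq_iff] <;> norm_num [Complex.conj_ofNat])

/-- If a PSD matrix has a nonzero entry in row `i`, its `i`-th diagonal entry is nonzero. -/
lemma diag_ne_zero {M : Matrix (Fin 7) (Fin 7) ℂ} (hM : M.PosSemidef) {i j : Fin 7}
    (h : M i j ≠ 0) : M i i ≠ 0 := by
  intro hii
  have h0 : star (Pi.single i 1 : Fin 7 → ℂ) ⬝ᵥ M *ᵥ Pi.single i 1 = 0 := by
    simp [Matrix.mulVec_single, dotProduct, Pi.single_apply, hii]
  have hcol := (hM.dotProduct_mulVec_zero_iff _).mp h0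
  have hji : M j i = 0 := by
    have := congrFun hcol j
    simpa [Matrix.mulVec_single] using this
  have : M i j = 0 := by
    have := congrFun (congrFun hM.isHermitian.eq i) j
    simp only [Matrix.conjTranspose_apply] at this
    rw [← this, hji, star_zero]
  exact h this

set_option maxHeartbeats 1000000 in
/-- msr(G1224) = 3. -/
theorem msr_G1224 :
    (∃ M : Matrix (Fin 7) (Fin 7) ℂ, M.PosSemidef ∧ HasGraphG1224 M ∧ M.rank = 3) ∧
    (∀ M : Matrix (Fin 7) (Fin 7) ℂ, M.PosSemidef → HasGraphG1224 M → 3 ≤ M.rank) := by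
  have lower : ∀ M : Matrix (Fin 7) (Fin 7) ℂ, M.PosSemidef → HasGraphG1224 M → 3 ≤ M.rank := by
    intro M hM hG
    have c0 : ((0 : Fin 7) : ℕ) = 0 := rfl
    have c1 : ((1 : Fin 7) : ℕ) = 1 := rfl
    have c4 : ((4 : Fin 7) : ℕ) = 4 := rfl
    have c5 : ((5 : Fin 7) : ℕ) = 5 := rfl
    have nz : ∀ i j : Fin 7, i ≠ j → s((i : ℕ) + 1, (j : ℕ) + 1) ∉ edgesG1224 → M i j = 0 := by
      intro i j hij hne
      by_contra h
      exact hne ((hG i j hij).mp h)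
    have h04 : M 0 4 = 0 := nz 0 4 (by decide) (by simp only [c0, c1, c4, c5]; simp [edgesG1224, Sym2.eq_iff])
    have h05 : M 0 5 = 0 := nz 0 5 (by decide) (by simp only [c0, c1, c4, c5]; simp [edgesG1224, Sym2.eq_iff])
    have h45 : M 4 5 = 0 := nz 4 5 (by decide) (by simp only [c0, c1, c4, c5]; simp [edgesG1224, Sym2.eq_iff])
    have h40 : M 4 0 = 0 := nz 4 0 (by decide) (by simp only [c0, c1, c4, c5]; simp [edgesG1224, Sym2.eq_iff])
    have h50 : M 5 0 = 0 := nz 5 0 (by decide) (by simp only [c0, c1, c4, c5]; simp [edgesG1224, Sym2.eq_iff])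
    have h54 : M 5 4 = 0 := nz 5 4 (by decide) (by simp only [c0, c1, c4, c5]; simp [edgesG1224, Sym2.eq_iff])
    have h00 : M 0 0 ≠ 0 :=
      diag_ne_zero hM ((hG 0 1 (by decide)).mpr (by simp only [c0, c1, c4, c5]; simp [edgesG1224, Sym2.eq_iff]))
    have h44 : M 4 4 ≠ 0 :=
      diag_ne_zero hM ((hG 4 1 (by decide)).mpr (by simp only [c0, c1, c4, c5]; simp [edgesG1224, Sym2.eq_iff]))
    have h55 : M 5 5 ≠ 0 :=
      diag_ne_zero hM ((hG 5 1 (by decide)).mpr (by simp only [c0, c1, c4, c5]; simp [edgesG1224, Sym2.eq_iff]))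
    set f : Fin 3 → Fin 7 := ![0, 4, 5] with hf
    have key : M.submatrix f f =
        ((1 : Matrix (Fin 7) (Fin 7) ℂ).submatrix f (Equiv.refl (Fin 7))) * M *
          ((1 : Matrix (Fin 7) (Fin 7) ℂ).submatrix (Equiv.refl (Fin 7)) f) := by
      rw [Matrix.one_submatrix_mul, Matrix.mul_submatrix_one, Matrix.submatrix_submatrix]
      simp
    have hrankle : (M.submatrix f f).rank ≤ M.rank := by
      rw [key]
      exact le_trans (Matrix.rank_mul_le_left _ _) (Matrix.rank_mul_le_right _ _)
    have hdiag : M.submatrix f f = Matrix.diagonal ![M 0 0, M 4 4, M 5 5] := by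
      ext i j
      fin_cases i <;> fin_cases j <;>
        simp [hf, Matrix.submatrix_apply, Matrix.diagonal, h04, h05, h45, h40, h50, h54]
    have hr3 : (M.submatrix f f).rank = 3 := by
      rw [hdiag, Matrix.rank_of_isUnit]
      · simp
      · rw [Matrix.isUnit_iff_isUnit_det, Matrix.det_diagonal]
        simp [Fin.prod_univ_three, isUnit_iff_ne_zero, h00, h44, h55]
    exact le_trans (le_of_eq hr3.symm) hrankle
  refine ⟨⟨Amat * Amatᴴ, Matrix.posSemidef_self_mul_conjTranspose _, amat_hasGraph, ?_⟩, lower⟩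
  refine le_antisymm ?_ (lower _ (Matrix.posSemidef_self_mul_conjTranspose _) amat_hasGraph)
  calc (Amat * Amatᴴ).rank ≤ Amat.rank := Matrix.rank_mul_le_left _ _
    _ ≤ 3 := by simpa using Amat.rank_le_card_width
end
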